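/- For every natural number n and all real x and t, Σ_{r=0}^∞ ω_{n,r}(x) t^r/r! = e^t Σ_{k=0}^n ( Σ_{j=0}^k S(n,k) L(k,j) t^j ) x^k, where r runs over nonnegative integers. -/

import Mathlib

open Finset MeasureTheory Real

/-- Stirling numbers of the second kind. -/
def stirling2 : ℕ → ℕ → ℕ
  | 0, 0 => 1
  | 0, _ + 1 => 0
  | _ + 1, 0 => 0
  | n + 1, k + 1 => (k + 1) * stirling2 n (k + 1) + stirling2 n k

/-- The generalized geometric polynomials `ω_{n,r}(x) = Σ_{k=0}^n S(n,k) (r)_k x^k`,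
where `(r)_k` is the rising factorial (Pochhammer symbol). -/
noncomputable def geomPoly (n : ℕ) (r x : ℝ) : ℝ :=
  ∑ k ∈ Finset.range (n + 1), (stirling2 n k : ℝ) * (ascPochhammer ℝ k).eval r * x ^ k

/-- The exponential polynomials `φ_n(x) = Σ_{k=0}^n S(n,k) x^k`. -/
noncomputable def expPoly (n : ℕ) (x : ℝ) : ℝ :=
  ∑ k ∈ Finset.range (n + 1), (stirling2 n k : ℝ) * x ^ k
/-- The (unsigned) Lah numbers: `L(n,k) = (n!/k!) C(n-1,k-1)` for `n, k ≥ 1`,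
`L(0,0) = 1`, `L(n,0) = 0` for `n ≥ 1` (and `L(n,k) = 0` for `k > n`). -/
def lah : ℕ → ℕ → ℕ
  | 0, 0 => 1
  | 0, _ + 1 => 0
  | _ + 1, 0 => 0
  | n + 1, k + 1 => (n + 1).factorial / (k + 1).factorial * Nat.choose n k

lemma factorial_mul_lah (n k : ℕ) :
    (k+1).factorial * lah (n+1) (k+1) = (n+1).factorial * n.choose k := by
  rcases le_or_gt k n with h | h
  · have hdvd : (k+1).factorial ∣ (n+1).factorial :=
      Nat.factorial_dvd_factorial (by omega)
    show (k+1).factorial * ((n+1).factorial / (k+1).factorial * n.choose k) = _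
    rw [← mul_assoc, Nat.mul_div_cancel' hdvd]
  · simp [lah, Nat.choose_eq_zero_of_lt h]

lemma lah_gt {k j : ℕ} (h : k < j) : lah k j = 0 := by
  cases j with
  | zero => omega
  | succ j => cases k with
    | zero => rfl
    | succ k => simp [lah, Nat.choose_eq_zero_of_lt (show k < j by omega)]

lemma choose_key (k j : ℕ) :
    (k+2) * Nat.choose (k+1) (j+1) = (j+2) * Nat.choose k j + (k+j+3) * Nat.choose k (j+1) := by
  rcases le_or_gt j k with h | h
  · have pascal : Nat.choose (k+1) (j+1) = Nat.choose k j + Nat.choose k (j+1) :=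
      Nat.choose_succ_succ k j
    have hcr := Nat.choose_succ_right_eq k j
    zify [h] at hcr ⊢
    have pascal' : ((k+1).choose (j+1) : ℤ) = k.choose j + k.choose (j+1) := by
      exact_mod_cast pascal
    linear_combination ((k:ℤ)+2) * pascal' - hcr
  · simp [Nat.choose_eq_zero_of_lt (show k < j by omega),
      Nat.choose_eq_zero_of_lt (show k < j+1 by omega),
      Nat.choose_eq_zero_of_lt (show k+1 < j+1 by omega)]

lemma lah_rec (k j : ℕ) : lah (k+1) (j+1) = lah k j + (k+j+1) * lah k (j+1) := by
  cases k with
  | zero =>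
    cases j with
    | zero => rfl
    | succ j => simp [lah_gt (show 1 < j+2 by omega), lah_gt (show 0 < j+1 by omega),
        lah_gt (show 0 < j+2 by omega)]
  | succ k =>
    cases j with
    | zero =>
      have h1 : lah (k+2) 1 = (k+2).factorial := by simp [lah, Nat.factorial]
      have h2 : lah (k+1) 1 = (k+1).factorial := by simp [lah, Nat.factorial]
      rw [h1, h2, show lah (k+1) 0 = 0 from rfl, Nat.factorial_succ (k+1)]
      ring
    | succ j =>
      apply Nat.eq_of_mul_eq_mul_left (Nat.factorial_pos (j+2))
      rw [factorial_mul_lah (k+1) (j+1), Nat.mul_add]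
      have e1 : (j+2).factorial * ((k+1+(j+1)+1) * lah (k+1) (j+2)) =
          (k+j+3) * ((j+2).factorial * lah (k+1) (j+2)) := by ring
      have e2 : (j+2).factorial * lah (k+1) (j+1) =
          (j+2) * ((j+1).factorial * lah (k+1) (j+1)) := by
        rw [Nat.factorial_succ (j+1)]; ring
      rw [e1, e2, factorial_mul_lah k j, factorial_mul_lah k (j+1),
        Nat.factorial_succ (k+1)]
      have := choose_key k j
      nlinarith [this]

open Finset in
lemma asc_eq_sum_lah_desc (k : ℕ) (r : ℝ) :
    (ascPochhammer ℝ k).eval r =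
      ∑ j ∈ range (k+1), (lah k j : ℝ) * (descPochhammer ℝ j).eval r := by
  induction k with
  | zero => simp [lah]
  | succ k ih =>
    rw [ascPochhammer_succ_eval, ih, Finset.sum_mul]
    have step : ∀ j, ((lah k j : ℝ) * (descPochhammer ℝ j).eval r) * (r + k) =
        (lah k j : ℝ) * (descPochhammer ℝ (j+1)).eval r
          + ((k + j : ℕ) : ℝ) * (lah k j : ℝ) * (descPochhammer ℝ j).eval r := by
      intro j
      rw [descPochhammer_succ_eval]
      push_cast
      ring
    rw [Finset.sum_congr rfl (fun j _ => step j), Finset.sum_add_distrib]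
    -- RHS target: split sum over range (k+2)
    rw [Finset.sum_range_succ' (fun j => (lah (k+1) j : ℝ) * (descPochhammer ℝ j).eval r) (k+1)]
    have h0 : (lah (k+1) 0 : ℝ) * (descPochhammer ℝ 0).eval r = 0 := by
      simp [show lah (k+1) 0 = 0 from rfl]
    rw [h0, add_zero]
    have hrec : ∀ i, (lah (k+1) (i+1) : ℝ) * (descPochhammer ℝ (i+1)).eval r =
        (lah k i : ℝ) * (descPochhammer ℝ (i+1)).eval r
          + ((k + i + 1 : ℕ) : ℝ) * (lah k (i+1) : ℝ) * (descPochhammer ℝ (i+1)).eval r := by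
      intro i
      rw [lah_rec k i]
      push_cast
      ring
    rw [Finset.sum_congr rfl (fun i _ => hrec i), Finset.sum_add_distrib]
    congr 1
    -- second sums: LHS over range (k+1) of (k+j) L(k,j) desc_j ; RHS over range(k+1) shifted
    rw [Finset.sum_range_succ' (fun j => ((k + j : ℕ) : ℝ) * (lah k j : ℝ) * (descPochhammer ℝ j).eval r) k]
    rw [Finset.sum_range_succ (fun i => ((k + i + 1 : ℕ) : ℝ) * (lah k (i+1) : ℝ) * (descPochhammer ℝ (i+1)).eval r) k]
    have hz1 : ((k + 0 : ℕ) : ℝ) * (lah k 0 : ℝ) * (descPochhammer ℝ 0).eval r = 0 := by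
      cases k with
      | zero => simp
      | succ k => simp [show lah (k+1) 0 = 0 from rfl]
    have hz2 : ((k + k + 1 : ℕ) : ℝ) * (lah k (k+1) : ℝ) * (descPochhammer ℝ (k+1)).eval r = 0 := by
      simp [lah_gt (show k < k+1 by omega)]
    rw [hz1, hz2, add_zero, add_zero]
    exact Finset.sum_congr rfl fun i _ => by rw [← Nat.add_assoc]

lemma hasSum_exp_real (t : ℝ) :
    HasSum (fun n : ℕ => t ^ n / n.factorial) (Real.exp t) := by
  rw [Real.exp_eq_exp_ℝ]
  have := NormedSpace.exp_series_hasSum_exp' (𝕂 := ℝ) t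
  simpa [smul_eq_mul, div_eq_inv_mul] using this

lemma hasSum_descFactorial (j : ℕ) (t : ℝ) :
    HasSum (fun r : ℕ => (r.descFactorial j : ℝ) * t ^ r / r.factorial)
      (t ^ j * Real.exp t) := by
  set f : ℕ → ℝ := fun r => (r.descFactorial j : ℝ) * t ^ r / r.factorial with hf
  have hshift : (fun m : ℕ => f (m + j)) = fun m : ℕ => t ^ j * (t ^ m / m.factorial) := by
    funext m
    have hd : m.factorial * (m + j).descFactorial j = (m + j).factorial := by
      have := Nat.factorial_mul_descFactorial (show j ≤ m + j by omega)
      simpa using this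
    have hne : (m.factorial : ℝ) ≠ 0 := by positivity
    have hne2 : ((m+j).factorial : ℝ) ≠ 0 := by positivity
    simp only [hf]
    rw [pow_add]
    field_simp
    calc ((m + j).descFactorial j : ℝ) * t ^ m * t ^ j * m.factorial
        = t ^ m * t ^ j * ((m.factorial * (m + j).descFactorial j : ℕ) : ℝ) := by
          push_cast; ring
      _ = t ^ m * t ^ j * ((m + j).factorial : ℝ) := by rw [hd]
  have h1 : HasSum (fun m : ℕ => f (m + j)) (t ^ j * Real.exp t) := by
    rw [hshift]; exact (hasSum_exp_real t).mul_left _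
  have h2 := (hasSum_nat_add_iff (f := f) j).mp h1
  have hz : ∑ i ∈ Finset.range j, f i = 0 := by
    apply Finset.sum_eq_zero
    intro i hi
    have : i.descFactorial j = 0 :=
      Nat.descFactorial_eq_zero_iff_lt.mpr (Finset.mem_range.mp hi)
    simp [hf, this]
  rwa [hz, add_zero] at h2

open Finset in
lemma hasSum_asc (k : ℕ) (t : ℝ) :
    HasSum (fun r : ℕ => (ascPochhammer ℝ k).eval (r : ℝ) * t ^ r / r.factorial)
      (Real.exp t * ∑ j ∈ range (k+1), (lah k j : ℝ) * t ^ j) := by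
  have heq : ∀ r : ℕ, (ascPochhammer ℝ k).eval (r : ℝ) * t ^ r / r.factorial =
      ∑ j ∈ range (k+1), (lah k j : ℝ) * ((r.descFactorial j : ℝ) * t ^ r / r.factorial) := by
    intro r
    rw [asc_eq_sum_lah_desc, Finset.sum_mul, Finset.sum_div]
    refine Finset.sum_congr rfl fun j _ => ?_
    rw [descPochhammer_eval_eq_descFactorial]
    ring
  have hsum : HasSum (fun r : ℕ =>
      ∑ j ∈ range (k+1), (lah k j : ℝ) * ((r.descFactorial j : ℝ) * t ^ r / r.factorial))
      (∑ j ∈ range (k+1), (lah k j : ℝ) * (t ^ j * Real.exp t)) :=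
    hasSum_sum fun j _ => (hasSum_descFactorial j t).mul_left _
  have : (∑ j ∈ range (k+1), (lah k j : ℝ) * (t ^ j * Real.exp t))
      = Real.exp t * ∑ j ∈ range (k+1), (lah k j : ℝ) * t ^ j := by
    rw [Finset.mul_sum]
    exact Finset.sum_congr rfl fun j _ => by ring
  rw [← this]
  exact hsum.congr_fun (fun r => heq r)

/-- For every natural `n` and all real `x`, `t`,
`Σ_{r=0}^∞ ω_{n,r}(x) t^r/r! = e^t Σ_{k=0}^n (Σ_{j=0}^k S(n,k) L(k,j) t^j) x^k`. -/
theorem geomPoly_egf_in_r_lah (n : ℕ) (x t : ℝ) :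
    HasSum (fun r : ℕ => geomPoly n (r : ℝ) x * t ^ r / r.factorial)
      (Real.exp t * ∑ k ∈ Finset.range (n + 1),
        (∑ j ∈ Finset.range (k + 1), (stirling2 n k : ℝ) * (lah k j : ℝ) * t ^ j) * x ^ k) := by
  have heq : ∀ r : ℕ, geomPoly n (r : ℝ) x * t ^ r / r.factorial =
      ∑ k ∈ range (n+1), ((stirling2 n k : ℝ) * x ^ k) *
        ((ascPochhammer ℝ k).eval (r : ℝ) * t ^ r / r.factorial) := by
    intro r
    rw [geomPoly, Finset.sum_mul, Finset.sum_div]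
    exact Finset.sum_congr rfl fun k _ => by ring
  have hsum : HasSum (fun r : ℕ => ∑ k ∈ range (n+1), ((stirling2 n k : ℝ) * x ^ k) *
        ((ascPochhammer ℝ k).eval (r : ℝ) * t ^ r / r.factorial))
      (∑ k ∈ range (n+1), ((stirling2 n k : ℝ) * x ^ k) *
        (Real.exp t * ∑ j ∈ range (k+1), (lah k j : ℝ) * t ^ j)) :=
    hasSum_sum fun k _ => (hasSum_asc k t).mul_left _
  have hfinal : (∑ k ∈ range (n+1), ((stirling2 n k : ℝ) * x ^ k) *
        (Real.exp t * ∑ j ∈ range (k+1), (lah k j : ℝ) * t ^ j))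
      = Real.exp t * ∑ k ∈ range (n + 1),
        (∑ j ∈ range (k + 1), (stirling2 n k : ℝ) * (lah k j : ℝ) * t ^ j) * x ^ k := by
    rw [Finset.mul_sum]
    refine Finset.sum_congr rfl fun k _ => ?_
    rw [Finset.mul_sum, Finset.mul_sum, Finset.sum_mul, Finset.mul_sum]
    refine Finset.sum_congr rfl fun j _ => by ring
  rw [← hfinal]
  exact hsum.congr_fun (fun r => heq r)
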